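/- Let d ≥ 1 and β > β_d, where β_d = 1/I(0) (with β_d = 0 for d = 1, 2), let λ₀ > 0 be the unique solution of I(λ₀) = 1/β, and let ψ_β(x) = β (2π)^{−d} ∫_{[−π,π]^d} cos⟨φ,x⟩/(λ₀ + Φ(φ)) dφ. Then for every k ∈ ℕ the k-th moment ∑_{x ∈ ℤ^d} ‖x‖^k ψ_β(x)² is finite; that is, the probability measure π_β on ℤ^d with weights ψ_β(x)²/‖ψ_β‖²_{ℓ²} has finite moments of all orders. -/

import Mathlib

open MeasureTheory Real Filter
open scoped ENNReal

noncomputable section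

/-- The Fourier symbol `Φ(φ) = 2 ∑_j (1 - cos φ_j)` of the negative discrete Laplacian on `ℤ^d`. -/
def Phi (d : ℕ) (φ : Fin d → ℝ) : ℝ := 2 * ∑ j, (1 - Real.cos (φ j))

/-- The cube `[-π, π]^d`. -/
def cube (d : ℕ) : Set (Fin d → ℝ) := Set.univ.pi fun _ => Set.Icc (-π) π

/-- `I(λ) = (2π)^{-d} ∫_{[-π,π]^d} (λ + Φ(φ))⁻¹ dφ` (Bochner integral, real-valued). -/
def Ir (d : ℕ) (lam : ℝ) : ℝ := ((2 * π) ^ d)⁻¹ * ∫ φ in cube d, (lam + Phi d φ)⁻¹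

/-- The lattice `ℤ^d`. -/
abbrev Zd (d : ℕ) := Fin d → ℤ

/-- The Hilbert space `ℓ²(ℤ^d)` of real square-summable sequences. -/
abbrev l2 (d : ℕ) := lp (fun _ : Zd d => ℝ) 2

/-- The indicator `δ_x ∈ ℓ²(ℤ^d)` of the point `x`. -/
def delta (d : ℕ) (x : Zd d) : l2 d := lp.single 2 x 1

/-- The pointwise action of `H_β = Δ + β δ₀`:
`(H_β f)(x) = ∑_{y : |y-x|=1} (f y - f x) + β·1_{x=0}·f x`, where the sum over the `2d`
nearest neighbours is written out explicitly. -/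
def Hform (d : ℕ) (β : ℝ) (f : Zd d → ℝ) (x : Zd d) : ℝ :=
  (∑ i : Fin d, (f (Function.update x i (x i + 1)) + f (Function.update x i (x i - 1))))
    - 2 * d * f x + β * (if x = 0 then f x else 0)

/-- `H` is the bounded operator `H_β` on `ℓ²(ℤ^d)`. -/
def IsHamiltonian (d : ℕ) (β : ℝ) (H : l2 d →L[ℝ] l2 d) : Prop :=
  ∀ (f : l2 d) (x : Zd d), H f x = Hform d β (⇑f) x

/-- Heat kernel `p_β(t,x,y) = ⟨exp(t H_β) δ_y, δ_x⟩`. -/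
def heatKernel (d : ℕ) (H : l2 d →L[ℝ] l2 d) (t : ℝ) (x y : Zd d) : ℝ :=
  inner ℝ (NormedSpace.exp (t • H) (delta d y)) (delta d x)

/-- The candidate eigenfunction: `ψ(x) = β (2π)^{-d} ∫_{[-π,π]^d} cos⟨φ,x⟩/(λ₀ + Φ(φ)) dφ`. -/
def psiFun (d : ℕ) (β lam0 : ℝ) (x : Zd d) : ℝ :=
  β * (((2 * π) ^ d)⁻¹ *
    ∫ φ in cube d, Real.cos (∑ i, φ i * (x i : ℝ)) / (lam0 + Phi d φ))

/-- `I(λ)` as an extended-nonnegative-real (so that `I(0) = ∞` for `d = 1, 2` makes sense). -/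
def IE (d : ℕ) (lam : ℝ) : ℝ≥0∞ :=
  (∫⁻ φ in cube d, ENNReal.ofReal ((lam + Phi d φ)⁻¹)) / ENNReal.ofReal ((2 * π) ^ d)

/-- The Euclidean norm of a lattice point. -/
def latNorm (d : ℕ) (x : Zd d) : ℝ := Real.sqrt (∑ i, ((x i : ℝ)) ^ 2)

lemma cube_measurable (d : ℕ) : MeasurableSet (cube d) :=
  MeasurableSet.univ_pi fun _ => measurableSet_Icc

lemma cube_compact (d : ℕ) : IsCompact (cube d) :=
  isCompact_univ_pi fun _ => isCompact_Icc

lemma int_exp_Icc_zero {n : ℤ} (hn : n ≠ 0) :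
    ∫ t in Set.Icc (-π) π, Complex.exp ((t * (n : ℝ) : ℝ) * Complex.I) = 0 := by
  have hc : ((n : ℂ) * Complex.I) ≠ 0 :=
    mul_ne_zero (Int.cast_ne_zero.mpr hn) Complex.I_ne_zero
  have h1 : ∀ t : ℝ, ((t * (n : ℝ) : ℝ) : ℂ) * Complex.I = ((n : ℂ) * Complex.I) * (t : ℂ) := by
    intro t; push_cast; ring
  simp_rw [h1]
  rw [MeasureTheory.integral_Icc_eq_integral_Ioc,
    ← intervalIntegral.integral_of_le (by linarith [Real.pi_pos] : -π ≤ π),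
    integral_exp_mul_complex hc]
  have e1 : (n : ℂ) * Complex.I * (π : ℝ) = ((n : ℂ) * (π : ℂ)) * Complex.I := by push_cast; ring
  have e2 : (n : ℂ) * Complex.I * ((-π : ℝ) : ℂ) = (-((n : ℂ) * (π : ℂ))) * Complex.I := by
    push_cast; ring
  rw [e1, e2, Complex.exp_mul_I, Complex.exp_mul_I, Complex.cos_neg, Complex.sin_neg,
    Complex.sin_int_mul_pi]
  ring

lemma cube_cos_eq_zero (d : ℕ) (x : Zd d) (hx : x ≠ 0) :
    ∫ φ in cube d, Real.cos (∑ i, φ i * (x i : ℝ)) = 0 := by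
  obtain ⟨i₀, hi₀⟩ : ∃ i, x i ≠ 0 := by
    by_contra h; push_neg at h; exact hx (funext h)
  have hkey : (∫ φ in cube d,
      Complex.exp (((∑ i, φ i * (x i : ℝ)) : ℝ) * Complex.I)) = 0 := by
    have hprod : ∀ φ : Fin d → ℝ,
        Complex.exp (((∑ i, φ i * (x i : ℝ)) : ℝ) * Complex.I)
          = ∏ i, Complex.exp (((φ i * (x i : ℝ)) : ℝ) * Complex.I) := by
      intro φ
      rw [← Complex.exp_sum]
      congr 1
      push_cast
      rw [Finset.sum_mul]
    simp_rw [hprod]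
    rw [← MeasureTheory.integral_indicator (cube_measurable d)]
    have hind : ((cube d).indicator fun φ : Fin d → ℝ =>
          ∏ i, Complex.exp (((φ i * (x i : ℝ)) : ℝ) * Complex.I))
        = fun φ : Fin d → ℝ => ∏ i, (Set.Icc (-π) π).indicator
            (fun t : ℝ => Complex.exp (((t * (x i : ℝ)) : ℝ) * Complex.I)) (φ i) := by
      funext φ
      by_cases h : φ ∈ cube d
      · rw [Set.indicator_of_mem h]
        refine Finset.prod_congr rfl fun i _ => ?_
        rw [Set.indicator_of_mem (h i (Set.mem_univ i))]
      · rw [Set.indicator_of_notMem h]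
        have : ∃ i, φ i ∉ Set.Icc (-π) π := by
          by_contra hc; push_neg at hc
          exact h fun i _ => hc i
        obtain ⟨i, hi⟩ := this
        exact (Finset.prod_eq_zero (Finset.mem_univ i)
          (Set.indicator_of_notMem hi _)).symm
    rw [hind]
    rw [MeasureTheory.volume_pi]
    rw [MeasureTheory.integral_fintype_prod_eq_prod (ι := Fin d)
      (fun i t => (Set.Icc (-π) π).indicator
        (fun t : ℝ => Complex.exp (((t * (x i : ℝ)) : ℝ) * Complex.I)) t)]
    refine Finset.prod_eq_zero (Finset.mem_univ i₀) ?_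
    rw [MeasureTheory.integral_indicator measurableSet_Icc]
    exact int_exp_Icc_zero hi₀
  have hint : IntegrableOn
      (fun φ : Fin d → ℝ => Complex.exp (((∑ i, φ i * (x i : ℝ)) : ℝ) * Complex.I))
      (cube d) := by
    apply ContinuousOn.integrableOn_compact (cube_compact d)
    exact Continuous.continuousOn (by fun_prop)
  have h2 := integral_re (μ := volume.restrict (cube d)) hint
  rw [hkey] at h2
  simp only [Complex.zero_re, RCLike.re_to_complex] at h2
  rw [← h2]
  refine integral_congr_ae (Filter.Eventually.of_forall fun φ => ?_)
  exact (Complex.exp_ofReal_mul_I_re _).symm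

lemma Phi_nonneg (d : ℕ) (φ : Fin d → ℝ) : 0 ≤ Phi d φ := by
  unfold Phi
  have h : ∀ j ∈ Finset.univ, (0:ℝ) ≤ 1 - Real.cos (φ j) := fun j _ => by
    linarith [Real.cos_le_one (φ j)]
  have := Finset.sum_nonneg h
  linarith

lemma Phi_le (d : ℕ) (φ : Fin d → ℝ) : Phi d φ ≤ 4 * d := by
  unfold Phi
  have h : ∀ j ∈ Finset.univ, (1 - Real.cos (φ j)) ≤ 2 := fun j _ => by
    linarith [Real.neg_one_le_cos (φ j)]
  have := Finset.sum_le_sum h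
  simp only [Finset.sum_const, Finset.card_univ, Fintype.card_fin, nsmul_eq_mul] at this
  linarith

lemma Phi_continuous (d : ℕ) : Continuous (Phi d) := by
  unfold Phi; fun_prop

lemma denom_pos {lam0 : ℝ} (h : 0 < lam0) (d : ℕ) (φ : Fin d → ℝ) : 0 < lam0 + Phi d φ := by
  linarith [Phi_nonneg d φ]

lemma integ_cos_div {lam0 : ℝ} (h : 0 < lam0) (d : ℕ) (x : Zd d) :
    IntegrableOn (fun φ => Real.cos (∑ i, φ i * (x i : ℝ)) / (lam0 + Phi d φ)) (cube d) := by
  apply ContinuousOn.integrableOn_compact (cube_compact d)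
  apply Continuous.continuousOn
  exact Continuous.div (by fun_prop) (continuous_const.add (Phi_continuous d)) fun φ => (denom_pos h d φ).ne'

lemma integ_cos (d : ℕ) (x : Zd d) :
    IntegrableOn (fun φ : Fin d → ℝ => Real.cos (∑ i, φ i * (x i : ℝ))) (cube d) := by
  apply ContinuousOn.integrableOn_compact (cube_compact d)
  exact Continuous.continuousOn (by fun_prop)

lemma cube_volume (d : ℕ) : volume (cube d) = ENNReal.ofReal ((2 * π) ^ d) := by
  unfold cube
  rw [volume_pi_pi]
  simp only [Real.volume_Icc]
  rw [Finset.prod_const, Finset.card_univ, Fintype.card_fin,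
    ← ENNReal.ofReal_pow (by linarith [Real.pi_pos])]
  norm_num
  ring_nf

lemma sum_update_add (d : ℕ) (x : Zd d) (φ : Fin d → ℝ) (i : Fin d) (a : ℤ) :
    ∑ j, φ j * ((Function.update x i (x i + a) j : ℤ) : ℝ)
      = (∑ j, φ j * (x j : ℝ)) + (a : ℝ) * φ i := by
  have h : ∀ j ∈ Finset.univ, φ j * ((Function.update x i (x i + a) j : ℤ) : ℝ)
      = φ j * (x j : ℝ) + (if j = i then (a : ℝ) * φ j else 0) := by
    intro j _
    rcases eq_or_ne j i with rfl | hj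
    · simp only [Function.update_self, if_pos rfl]
      push_cast; ring
    · simp [Function.update_of_ne hj, hj]
  rw [Finset.sum_congr rfl h, Finset.sum_add_distrib,
    Finset.sum_ite_eq' Finset.univ i (fun j => (a : ℝ) * φ j)]
  simp

lemma psi_recursion {d : ℕ} {β lam0 : ℝ} (h : 0 < lam0) (x : Zd d) (hx : x ≠ 0) :
    (2 * d + lam0) * psiFun d β lam0 x
      = ∑ i, (psiFun d β lam0 (Function.update x i (x i + 1))
            + psiFun d β lam0 (Function.update x i (x i - 1))) := by
  set D : (Fin d → ℝ) → ℝ := fun φ => lam0 + Phi d φ with hD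
  set S : (Fin d → ℝ) → ℝ := fun φ => ∑ j, φ j * (x j : ℝ) with hS
  have key : ∑ i, ((∫ φ in cube d,
        Real.cos (∑ j, φ j * ((Function.update x i (x i + 1) j : ℤ) : ℝ)) / D φ)
      + (∫ φ in cube d,
        Real.cos (∑ j, φ j * ((Function.update x i (x i - 1) j : ℤ) : ℝ)) / D φ))
      = (2 * d + lam0) * ∫ φ in cube d, Real.cos (S φ) / D φ := by
    have hsum : ∀ i : Fin d, (∫ φ in cube d,
          Real.cos (∑ j, φ j * ((Function.update x i (x i + 1) j : ℤ) : ℝ)) / D φ)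
        + (∫ φ in cube d,
          Real.cos (∑ j, φ j * ((Function.update x i (x i - 1) j : ℤ) : ℝ)) / D φ)
        = ∫ φ in cube d, (2 * Real.cos (S φ) * Real.cos (φ i)) / D φ := by
      intro i
      rw [← MeasureTheory.integral_add (integ_cos_div h d _) (integ_cos_div h d _)]
      refine integral_congr_ae (Filter.Eventually.of_forall fun φ => ?_)
      have e1 := sum_update_add d x φ i 1
      have e2 := sum_update_add d x φ i (-1)
      simp only [Int.cast_one, Int.cast_neg, one_mul, neg_one_mul] at e1 e2
      have e2' : x i + (-1) = x i - 1 := by ring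
      rw [e2'] at e2
      simp only [hD, hS]
      rw [e1, e2,
        show (∑ j, φ j * (x j : ℝ)) + -φ i = (∑ j, φ j * (x j : ℝ)) - φ i from by ring,
        Real.cos_add, Real.cos_sub]
      ring
    rw [Finset.sum_congr rfl fun i _ => hsum i]
    rw [← MeasureTheory.integral_finset_sum]
    swap
    · intro i _
      apply ContinuousOn.integrableOn_compact (cube_compact d)
      apply Continuous.continuousOn
      apply Continuous.div (by fun_prop) (continuous_const.add (Phi_continuous d))
      exact fun φ => (denom_pos h d φ).ne'
    have hpt : ∀ φ : Fin d → ℝ,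
        (∑ i, 2 * Real.cos (S φ) * Real.cos (φ i) / D φ)
          = (2 * d + lam0) * (Real.cos (S φ) / D φ) - Real.cos (S φ) := by
      intro φ
      have hDpos := denom_pos h d φ
      have hPhi : Phi d φ = 2 * d - 2 * ∑ i, Real.cos (φ i) := by
        unfold Phi
        rw [Finset.sum_sub_distrib]
        simp [Finset.card_univ, mul_sub]
      have e3 : (∑ i, 2 * Real.cos (S φ) * Real.cos (φ i) / D φ)
          = (2 * Real.cos (S φ) * ∑ i, Real.cos (φ i)) / D φ := by
        rw [← Finset.sum_div, ← Finset.mul_sum]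
      rw [e3]
      simp only [hD]
      have hne : lam0 + Phi d φ ≠ 0 := hDpos.ne'
      field_simp
      linear_combination (Real.cos (S φ)) * hPhi
    rw [integral_congr_ae (Filter.Eventually.of_forall fun φ => hpt φ)]
    rw [MeasureTheory.integral_sub]
    · rw [MeasureTheory.integral_const_mul]
      simp only [hS]
      rw [cube_cos_eq_zero d x hx]
      ring
    · apply MeasureTheory.Integrable.const_mul
      exact integ_cos_div h d x
    · exact integ_cos d x
  simp only [psiFun]
  set c : ℝ := ((2 * π) ^ d)⁻¹
  calc (2 * d + lam0) * (β * (c * ∫ φ in cube d, Real.cos (S φ) / D φ))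
      = β * (c * ((2 * d + lam0) * ∫ φ in cube d, Real.cos (S φ) / D φ)) := by ring
    _ = β * (c * ∑ i, ((∫ φ in cube d,
          Real.cos (∑ j, φ j * ((Function.update x i (x i + 1) j : ℤ) : ℝ)) / D φ)
        + (∫ φ in cube d,
          Real.cos (∑ j, φ j * ((Function.update x i (x i - 1) j : ℤ) : ℝ)) / D φ))) := by
        rw [key]
    _ = ∑ i, (β * (c * ∫ φ in cube d,
          Real.cos (∑ j, φ j * ((Function.update x i (x i + 1) j : ℤ) : ℝ)) / D φ)
        + β * (c * ∫ φ in cube d,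
          Real.cos (∑ j, φ j * ((Function.update x i (x i - 1) j : ℤ) : ℝ)) / D φ)) := by
        rw [Finset.mul_sum, Finset.mul_sum]
        refine Finset.sum_congr rfl fun i _ => by ring

lemma psi_bound {d : ℕ} {β lam0 : ℝ} (hβ : 0 ≤ β) (h : 0 < lam0) (x : Zd d) :
    |psiFun d β lam0 x| ≤ β / lam0 := by
  have hπ : (0:ℝ) < (2 * π) ^ d := by positivity
  have hT : ‖∫ φ in cube d, Real.cos (∑ i, φ i * (x i : ℝ)) / (lam0 + Phi d φ)‖
      ≤ (1 / lam0) * (volume (cube d)).toReal := by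
    apply norm_setIntegral_le_of_norm_le_const
    · rw [cube_volume]; exact ENNReal.ofReal_lt_top
    · intro φ _
      have hD := denom_pos h d φ
      rw [Real.norm_eq_abs, abs_div]
      refine div_le_div₀ zero_le_one (Real.abs_cos_le_one _) h ?_
      exact le_trans (by linarith [Phi_nonneg d φ]) (le_abs_self _)
  rw [Real.norm_eq_abs, cube_volume, ENNReal.toReal_ofReal hπ.le] at hT
  have hc : (0:ℝ) ≤ ((2 * π) ^ d)⁻¹ := by positivity
  have e : |psiFun d β lam0 x| = β * (((2 * π) ^ d)⁻¹
      * |∫ φ in cube d, Real.cos (∑ i, φ i * (x i : ℝ)) / (lam0 + Phi d φ)|) := by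
    rw [psiFun, abs_mul, abs_mul, abs_of_nonneg hβ, abs_of_nonneg hc]
  rw [e]
  have h2 : ((2 * π) ^ d)⁻¹ * ((1 / lam0) * (2 * π) ^ d) = 1 / lam0 := by
    field_simp
  calc β * (((2 * π) ^ d)⁻¹ * |_root_.id (∫ φ in cube d,
        Real.cos (∑ i, φ i * (x i : ℝ)) / (lam0 + Phi d φ))|)
      ≤ β * (((2 * π) ^ d)⁻¹ * ((1 / lam0) * (2 * π) ^ d)) := by
        apply mul_le_mul_of_nonneg_left (mul_le_mul_of_nonneg_left hT hc) hβ
    _ = β / lam0 := by rw [h2]; ring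

lemma natAbs_sum_update (d : ℕ) (x : Zd d) (i : Fin d) (a : ℤ)
    (ha : a = 1 ∨ a = -1) :
    ∑ j, (x j).natAbs ≤ (∑ j, ((Function.update x i (x i + a)) j).natAbs) + 1 := by
  have e : (fun j => ((Function.update x i (x i + a)) j).natAbs)
      = Function.update (fun j => (x j).natAbs) i (x i + a).natAbs := by
    funext j
    rcases eq_or_ne j i with rfl | hj
    · simp
    · simp [Function.update_of_ne hj]
  rw [e, Finset.sum_update_of_mem (Finset.mem_univ i),
    ← Finset.sum_erase_add Finset.univ _ (Finset.mem_univ i)]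
  have : (x i).natAbs ≤ (x i + a).natAbs + 1 := by rcases ha with rfl | rfl <;> omega
  rw [← Finset.erase_eq]
  omega

lemma psi_decay {d : ℕ} {β lam0 : ℝ} (hβ : 0 ≤ β) (h : 0 < lam0) :
    ∀ n : ℕ, ∀ x : Zd d, n ≤ ∑ i, (x i).natAbs →
      |psiFun d β lam0 x| ≤ (β / lam0) * (2 * d / (2 * d + lam0)) ^ n := by
  have hpos : (0:ℝ) < 2 * d + lam0 := by
    have : (0:ℝ) ≤ 2 * d := by positivity
    linarith
  intro n
  induction n with
  | zero => intro x _; simpa using psi_bound hβ h x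
  | succ n ih =>
    intro x hx
    have hx0 : x ≠ 0 := by
      intro h0
      rw [h0] at hx
      simp [Pi.zero_apply] at hx
    have hrec := psi_recursion (β := β) h x hx0
    set r : ℝ := 2 * d / (2 * d + lam0) with hr
    have hnb : ∀ (i : Fin d) (a : ℤ), a = 1 ∨ a = -1 →
        |psiFun d β lam0 (Function.update x i (x i + a))| ≤ (β / lam0) * r ^ n := by
      intro i a ha
      apply ih
      have := natAbs_sum_update d x i a ha
      omega
    have h1 : |psiFun d β lam0 x| * (2 * d + lam0) ≤ 2 * d * ((β / lam0) * r ^ n) := by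
      calc |psiFun d β lam0 x| * (2 * d + lam0)
          = |(2 * d + lam0) * psiFun d β lam0 x| := by
            rw [abs_mul, abs_of_nonneg hpos.le]; ring
        _ = |∑ i, (psiFun d β lam0 (Function.update x i (x i + 1))
              + psiFun d β lam0 (Function.update x i (x i - 1)))| := by rw [hrec]
        _ ≤ ∑ i, |psiFun d β lam0 (Function.update x i (x i + 1))
              + psiFun d β lam0 (Function.update x i (x i - 1))| :=
            Finset.abs_sum_le_sum_abs _ _
        _ ≤ ∑ _i : Fin d, 2 * ((β / lam0) * r ^ n) := by
            refine Finset.sum_le_sum fun i _ => ?_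
            have p1 := hnb i 1 (Or.inl rfl)
            have p2 := hnb i (-1) (Or.inr rfl)
            have e2 : x i + (-1) = x i - 1 := by ring
            rw [e2] at p2
            calc |psiFun d β lam0 (Function.update x i (x i + 1))
                  + psiFun d β lam0 (Function.update x i (x i - 1))|
                ≤ |psiFun d β lam0 (Function.update x i (x i + 1))|
                  + |psiFun d β lam0 (Function.update x i (x i - 1))| := abs_add_le _ _
              _ ≤ 2 * ((β / lam0) * r ^ n) := by linarith
        _ = 2 * d * ((β / lam0) * r ^ n) := by
            rw [Finset.sum_const, Finset.card_univ, Fintype.card_fin, nsmul_eq_mul]; ring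
    have h2 : |psiFun d β lam0 x| ≤ 2 * d * ((β / lam0) * r ^ n) / (2 * d + lam0) :=
      (le_div_iff₀ hpos).mpr h1
    calc |psiFun d β lam0 x| ≤ 2 * d * ((β / lam0) * r ^ n) / (2 * d + lam0) := h2
      _ = (β / lam0) * r ^ (n + 1) := by
          rw [pow_succ, hr]
          field_simp

lemma latNorm_nonneg (d : ℕ) (x : Zd d) : 0 ≤ latNorm d x := Real.sqrt_nonneg _

lemma latNorm_le (d : ℕ) (x : Zd d) :
    latNorm d x ≤ ((∑ i, (x i).natAbs : ℕ) : ℝ) := by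
  have h1 : (∑ i, ((x i : ℝ)) ^ 2) ≤ (((∑ i, (x i).natAbs : ℕ) : ℝ)) ^ 2 := by
    have e : ∀ i : Fin d, ((x i : ℝ)) ^ 2 = |(x i : ℝ)| ^ 2 := fun i => (sq_abs _).symm
    rw [Finset.sum_congr rfl fun i _ => e i]
    have h2 := Finset.sum_sq_le_sq_sum_of_nonneg
      (s := Finset.univ) (f := fun i : Fin d => |(x i : ℝ)|) (fun i _ => abs_nonneg _)
    refine h2.trans (le_of_eq ?_)
    congr 1
    push_cast [Nat.cast_natAbs]
    rfl
  calc latNorm d x ≤ Real.sqrt ((((∑ i, (x i).natAbs : ℕ) : ℝ)) ^ 2) := Real.sqrt_le_sqrt h1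
    _ = ((∑ i, (x i).natAbs : ℕ) : ℝ) := Real.sqrt_sq (by positivity)

lemma summable_geom_pi (t : ℝ) (ht0 : 0 ≤ t) (ht1 : t < 1) (d : ℕ) :
    Summable (fun x : Zd d => ∏ i, t ^ (x i).natAbs) := by
  induction d with
  | zero =>
    exact Summable.of_finite
  | succ d ihd =>
    have hZ : Summable (fun m : ℤ => t ^ m.natAbs) := by
      apply Summable.of_nat_of_neg <;>
        · simpa using summable_geometric_of_lt_one ht0 ht1
    have hprodsum := Summable.mul_of_nonneg hZ ihd
      (fun m => pow_nonneg ht0 _)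
      (fun y => Finset.prod_nonneg fun i _ => pow_nonneg ht0 _)
    have e : ((fun x : Zd (d + 1) => ∏ i, t ^ (x i).natAbs)
        ∘ (Fin.consEquiv (fun _ : Fin (d + 1) => ℤ)))
        = fun p : ℤ × (Fin d → ℤ) => t ^ p.1.natAbs * ∏ i, t ^ (p.2 i).natAbs := by
      funext p
      simp only [Function.comp_apply, Fin.consEquiv_apply]
      rw [Fin.prod_univ_succ]
      simp
    exact ((Fin.consEquiv (fun _ : Fin (d + 1) => ℤ)).summable_iff).mp (by rw [e]; exact hprodsum)

set_option maxHeartbeats 1000000 in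
theorem supercritical_moments' (d : ℕ) (hd : 1 ≤ d) (β : ℝ) (hβ : 0 ≤ β)
    (lam0 : ℝ) (hlam0 : 0 < lam0) :
    ∀ k : ℕ, Summable (fun x : Zd d => latNorm d x ^ k * psiFun d β lam0 x ^ 2) := by
  intro k
  have hd0 : (0:ℝ) < d := by
    have : (1:ℝ) ≤ d := by exact_mod_cast hd
    linarith
  have hpos : (0:ℝ) < 2 * d + lam0 := by linarith
  set r : ℝ := 2 * d / (2 * d + lam0) with hrdef
  have hr0 : 0 ≤ r := by positivity
  have hr1 : r < 1 := by rw [hrdef, div_lt_one hpos]; linarith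
  set s : ℝ := r ^ 2 with hsdef
  have hs0 : 0 ≤ s := by positivity
  have hs1 : s < 1 := by rw [hsdef]; nlinarith
  set t : ℝ := (1 + s) / 2 with htdef
  have ht0 : 0 < t := by rw [htdef]; linarith
  have hts : s < t := by rw [htdef]; linarith
  have ht1 : t < 1 := by rw [htdef]; linarith
  set u : ℝ := s / t with hudef
  have hu0 : 0 ≤ u := by positivity
  have hu1 : u < 1 := by rw [hudef, div_lt_one ht0]; linarith
  have hsum_u : Summable (fun n : ℕ => (n : ℝ) ^ k * u ^ n) :=
    summable_pow_mul_geometric_of_norm_lt_one k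
      (by rwa [Real.norm_eq_abs, abs_of_nonneg hu0])
  obtain ⟨C, hC⟩ := hsum_u.tendsto_atTop_zero.bddAbove_range
  have hCn : ∀ n : ℕ, (n : ℝ) ^ k * u ^ n ≤ C := fun n => hC (Set.mem_range_self n)
  have hst : ∀ n : ℕ, (n : ℝ) ^ k * s ^ n ≤ C * t ^ n := by
    intro n
    have e : s ^ n = u ^ n * t ^ n := by
      rw [hudef, div_pow, div_mul_cancel₀ _ (pow_ne_zero n ht0.ne')]
    rw [e, ← mul_assoc]
    exact mul_le_mul_of_nonneg_right (hCn n) (pow_nonneg ht0.le n)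
  set B : ℝ := β / lam0 with hBdef
  have hB0 : 0 ≤ B := div_nonneg hβ hlam0.le
  apply Summable.of_nonneg_of_le
    (f := fun x : Zd d => (B ^ 2 * C) * ∏ i, t ^ (x i).natAbs)
  · intro x
    exact mul_nonneg (pow_nonneg (latNorm_nonneg d x) k) (sq_nonneg _)
  · intro x
    set N : ℕ := ∑ i, (x i).natAbs with hN
    have h1 : latNorm d x ^ k ≤ ((N : ℕ) : ℝ) ^ k :=
      pow_le_pow_left₀ (latNorm_nonneg d x) (latNorm_le d x) k
    have h2 : psiFun d β lam0 x ^ 2 ≤ B ^ 2 * s ^ N := by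
      have hdec := psi_decay hβ hlam0 N x (le_refl _)
      calc psiFun d β lam0 x ^ 2 = |psiFun d β lam0 x| ^ 2 := (sq_abs _).symm
        _ ≤ (B * r ^ N) ^ 2 := pow_le_pow_left₀ (abs_nonneg _) hdec 2
        _ = B ^ 2 * s ^ N := by
            rw [hsdef, mul_pow, ← pow_mul, ← pow_mul, Nat.mul_comm]
    calc latNorm d x ^ k * psiFun d β lam0 x ^ 2
        ≤ ((N : ℕ) : ℝ) ^ k * (B ^ 2 * s ^ N) := by
          apply mul_le_mul h1 h2 (sq_nonneg _) (by positivity)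
      _ = B ^ 2 * (((N : ℕ) : ℝ) ^ k * s ^ N) := by ring
      _ ≤ B ^ 2 * (C * t ^ N) :=
          mul_le_mul_of_nonneg_left (hst N) (by positivity)
      _ = (B ^ 2 * C) * t ^ N := by ring
      _ = (B ^ 2 * C) * ∏ i, t ^ (x i).natAbs := by
          rw [hN, ← Finset.prod_pow_eq_pow_sum]
  · exact (summable_geom_pi t ht0.le ht1 d).mul_left _

/-- for `d ≥ 1` and `β > β_d = 1/I(0)` (interpreted as `β·I(0) > 1`, which for
`d = 1, 2` where `I(0) = ∞` just means `β > 0`), with `λ₀ > 0` the unique solution of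
`I(λ₀) = 1/β` and `ψ_β(x) = β (2π)^{-d} ∫ cos⟨φ,x⟩/(λ₀ + Φ(φ)) dφ`, every moment
`∑_x ‖x‖^k ψ_β(x)²` is finite; i.e. `π_β` has finite moments of all orders. -/
theorem supercritical_moments (d : ℕ) (hd : 1 ≤ d) (β : ℝ) (hβ : 0 ≤ β)
    (hsup : 1 < ENNReal.ofReal β * IE d 0)
    (lam0 : ℝ) (hlam0 : 0 < lam0) (hroot : Ir d lam0 = 1 / β) :
    ∀ k : ℕ, Summable (fun x : Zd d => latNorm d x ^ k * psiFun d β lam0 x ^ 2) :=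
  supercritical_moments' d hd β hβ lam0 hlam0
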